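/- Claim 1: Let W₁, W₂, X₁^N, V₁^N, V₂^N, Y₁^N, Ỹ₁^N be finite random variables such that X₁ᵢ (and hence V₁ᵢ) is a deterministic function of (W₁, Ỹ₁^{i−1}), Y₁^N is determined by (W₁, Ỹ₁^N) up to V₂^N (formally H(Y₁^N | W₁, Ỹ₁^N) = H(V₂^N | W₁, Ỹ₁^N)), and V₁^N is a deterministic function of (W₁, Ỹ₁^{N−1}). Then I(V₁^N; W₂) + H(V₂^N | W₁) − H(Y₁^N | W₁) − H(V₁^N | Y₁^N) ≤ H(Ỹ₁^N | W₁). -/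

import Mathlib

open Finset

/-- Probability mass of the event `X = x` under the pmf `p` on a finite sample space. -/
noncomputable def pmass {Ω S : Type*} [Fintype Ω] [DecidableEq S]
    (p : Ω → ℝ) (X : Ω → S) (x : S) : ℝ :=
  ∑ ω, if X ω = x then p ω else 0

/-- Shannon entropy (in bits) of a finitely valued random variable. -/
noncomputable def ent {Ω S : Type*} [Fintype Ω] [Fintype S] [DecidableEq S]
    (p : Ω → ℝ) (X : Ω → S) : ℝ :=
  -∑ x : S, pmass p X x * Real.logb 2 (pmass p X x)

/-- Conditional Shannon entropy H(X | Y) = H(X, Y) − H(Y), in bits. -/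
noncomputable def condEnt {Ω S T : Type*} [Fintype Ω] [Fintype S] [Fintype T]
    [DecidableEq S] [DecidableEq T] (p : Ω → ℝ) (X : Ω → S) (Y : Ω → T) : ℝ :=
  ent p (fun ω => (X ω, Y ω)) - ent p Y

/-- Mutual information I(X; Y) = H(X) + H(Y) − H(X, Y), in bits. -/
noncomputable def mutInfo {Ω S T : Type*} [Fintype Ω] [Fintype S] [Fintype T]
    [DecidableEq S] [DecidableEq T] (p : Ω → ℝ) (X : Ω → S) (Y : Ω → T) : ℝ :=
  ent p X + ent p Y - ent p (fun ω => (X ω, Y ω))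

/-- Conditional mutual information I(X; Y | Z), in bits. -/
noncomputable def condMutInfo {Ω S T U : Type*} [Fintype Ω] [Fintype S] [Fintype T] [Fintype U]
    [DecidableEq S] [DecidableEq T] [DecidableEq U]
    (p : Ω → ℝ) (X : Ω → S) (Y : Ω → T) (Z : Ω → U) : ℝ :=
  condEnt p X Z + condEnt p Y Z - condEnt p (fun ω => (X ω, Y ω)) Z

/-- Two random variables are independent under the pmf `p`. -/
def IndepRV {Ω S T : Type*} [Fintype Ω] [DecidableEq S] [DecidableEq T]
    (p : Ω → ℝ) (X : Ω → S) (Y : Ω → T) : Prop :=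
  ∀ x y, pmass p (fun ω => (X ω, Y ω)) (x, y) = pmass p X x * pmass p Y y

section Aux

variable {Ω S T U : Type*} [Fintype Ω]

lemma pmass_nonneg [DecidableEq S] (p : Ω → ℝ) (hp : ∀ ω, 0 ≤ p ω) (X : Ω → S) (x : S) :
    0 ≤ pmass p X x := by
  apply Finset.sum_nonneg
  intro ω _
  split <;> simp [hp ω]

lemma sum_pmass [Fintype S] [DecidableEq S] (p : Ω → ℝ) (X : Ω → S) :
    ∑ x, pmass p X x = ∑ ω, p ω := by
  unfold pmass
  rw [Finset.sum_comm]
  exact Finset.sum_congr rfl fun ω _ => by simp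

/-- marginalizing out the first coordinate -/
lemma pmass_fst [Fintype S] [DecidableEq S] [DecidableEq T]
    (p : Ω → ℝ) (X : Ω → S) (Y : Ω → T) (y : T) :
    ∑ x, pmass p (fun ω => (X ω, Y ω)) (x, y) = pmass p Y y := by
  unfold pmass
  rw [Finset.sum_comm]
  refine Finset.sum_congr rfl fun ω _ => ?_
  by_cases h : Y ω = y <;> simp [Prod.ext_iff, h]

/-- marginalizing out the middle coordinate -/
lemma pmass_mid [Fintype T] [DecidableEq S] [DecidableEq T] [DecidableEq U]
    (p : Ω → ℝ) (X : Ω → S) (Y : Ω → T) (Z : Ω → U) (x : S) (z : U) :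
    ∑ y, pmass p (fun ω => (X ω, (Y ω, Z ω))) (x, (y, z)) =
      pmass p (fun ω => (X ω, Z ω)) (x, z) := by
  unfold pmass
  rw [Finset.sum_comm]
  refine Finset.sum_congr rfl fun ω _ => ?_
  by_cases h1 : X ω = x <;> by_cases h2 : Z ω = z <;> simp [Prod.ext_iff, h1, h2]

lemma pmass_pair_le [DecidableEq S] [DecidableEq T]
    (p : Ω → ℝ) (hp : ∀ ω, 0 ≤ p ω) (X : Ω → S) (Y : Ω → T) (x : S) (y : T) :
    pmass p (fun ω => (X ω, Y ω)) (x, y) ≤ pmass p Y y := by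
  apply Finset.sum_le_sum
  intro ω _
  by_cases h : Y ω = y <;> by_cases h' : X ω = x <;> simp [Prod.ext_iff, h, h', hp ω]

/-- relabeling invariance of entropy -/
lemma ent_comp [Fintype S] [Fintype T] [DecidableEq S] [DecidableEq T]
    (p : Ω → ℝ) (X : Ω → S) (Y : Ω → T) (f : S → T) (hf : Function.Injective f)
    (hXY : ∀ ω, Y ω = f (X ω)) : ent p Y = ent p X := by
  have hval : ∀ x : S, pmass p Y (f x) = pmass p X x := by
    intro x
    refine Finset.sum_congr rfl fun ω _ => ?_
    rw [hXY ω]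
    simp [hf.eq_iff]
  have hzero : ∀ t : T, t ∉ Finset.univ.image f → pmass p Y t = 0 := by
    intro t ht
    apply Finset.sum_eq_zero
    intro ω _
    rw [hXY ω]
    rw [if_neg]
    intro h
    exact ht (Finset.mem_image.2 ⟨X ω, Finset.mem_univ _, h⟩)
  unfold ent
  congr 1
  rw [← Finset.sum_subset (Finset.subset_univ (Finset.univ.image f))
    (fun t _ ht => by rw [hzero t ht]; simp)]
  rw [Finset.sum_image (fun a _ b _ h => hf h)]
  exact Finset.sum_congr rfl fun x _ => by rw [hval x]

lemma ent_pair_fun [Fintype S] [Fintype T] [DecidableEq S] [DecidableEq T]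
    (p : Ω → ℝ) (X : Ω → S) (Y : Ω → T) (f : S → T) (hXY : ∀ ω, Y ω = f (X ω)) :
    ent p (fun ω => (Y ω, X ω)) = ent p X := by
  refine ent_comp p X _ (fun s => (f s, s)) (fun a b h => (Prod.ext_iff.1 h).2) ?_
  intro ω; simp [hXY ω]

/-- entropy of pair dominates entropy of a component -/
lemma ent_le_ent_pair [Fintype S] [Fintype T] [DecidableEq S] [DecidableEq T]
    (p : Ω → ℝ) (hp : ∀ ω, 0 ≤ p ω) (X : Ω → S) (Y : Ω → T) :
    ent p Y ≤ ent p (fun ω => (X ω, Y ω)) := by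
  unfold ent
  rw [neg_le_neg_iff]
  have hY : ∀ y, pmass p Y y * Real.logb 2 (pmass p Y y)
      = ∑ x, pmass p (fun ω => (X ω, Y ω)) (x, y) * Real.logb 2 (pmass p Y y) := by
    intro y
    rw [← Finset.sum_mul, pmass_fst]
  calc ∑ z : S × T, pmass p (fun ω => (X ω, Y ω)) z * Real.logb 2 (pmass p (fun ω => (X ω, Y ω)) z)
      ≤ ∑ z : S × T, pmass p (fun ω => (X ω, Y ω)) z * Real.logb 2 (pmass p Y z.2) := by
        apply Finset.sum_le_sum
        rintro ⟨x, y⟩ _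
        rcases eq_or_lt_of_le (pmass_nonneg p hp (fun ω => (X ω, Y ω)) (x, y)) with h0 | h0
        · rw [← h0]; simp
        · have := pmass_pair_le p hp X Y x y
          exact mul_le_mul_of_nonneg_left
            (Real.logb_le_logb_of_le (by norm_num) h0 this) (le_of_lt h0)
    _ = ∑ y, pmass p Y y * Real.logb 2 (pmass p Y y) := by
        rw [Fintype.sum_prod_type]
        rw [Finset.sum_comm]
        exact Finset.sum_congr rfl fun y _ => (hY y).symm

lemma submod_core {S T U : Type*} [Fintype S] [Fintype T] [Fintype U]
    (j : S → T → U → ℝ) (a : S → U → ℝ) (b : T → U → ℝ) (c : U → ℝ)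
    (hj : ∀ x y z, 0 ≤ j x y z)
    (hja : ∀ x z, ∑ y, j x y z = a x z)
    (hjb : ∀ y z, ∑ x, j x y z = b y z)
    (hac : ∀ z, ∑ x, a x z = c z)
    (hbc : ∀ z, ∑ y, b y z = c z) :
    ∑ x, ∑ z, a x z * Real.log (a x z) + ∑ y, ∑ z, b y z * Real.log (b y z)
      ≤ (∑ x, ∑ y, ∑ z, j x y z * Real.log (j x y z)) + ∑ z, c z * Real.log (c z) := by
  have ha0 : ∀ x z, 0 ≤ a x z := fun x z => (hja x z) ▸ Finset.sum_nonneg fun y _ => hj x y z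
  have hb0 : ∀ y z, 0 ≤ b y z := fun y z => (hjb y z) ▸ Finset.sum_nonneg fun x _ => hj x y z
  have hc0 : ∀ z, 0 ≤ c z := fun z => (hac z) ▸ Finset.sum_nonneg fun x _ => ha0 x z
  have hjlea : ∀ x y z, j x y z ≤ a x z := fun x y z =>
    (hja x z) ▸ Finset.single_le_sum (fun y _ => hj x y z) (Finset.mem_univ y)
  have hjleb : ∀ x y z, j x y z ≤ b y z := fun x y z =>
    (hjb y z) ▸ Finset.single_le_sum (fun x _ => hj x y z) (Finset.mem_univ x)
  have halec : ∀ x z, a x z ≤ c z := fun x z =>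
    (hac z) ▸ Finset.single_le_sum (fun x _ => ha0 x z) (Finset.mem_univ x)
  -- expansions of marginal entropies
  have E1 : ∑ x, ∑ z, a x z * Real.log (a x z)
      = ∑ x, ∑ y, ∑ z, j x y z * Real.log (a x z) := by
    refine Finset.sum_congr rfl fun x _ => ?_
    rw [Finset.sum_comm]
    refine Finset.sum_congr rfl fun z _ => ?_
    rw [← hja x z, Finset.sum_mul]
  have E2 : ∑ y, ∑ z, b y z * Real.log (b y z)
      = ∑ x, ∑ y, ∑ z, j x y z * Real.log (b y z) := by
    have swap : (∑ x, ∑ y, ∑ z, j x y z * Real.log (b y z))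
        = ∑ y, ∑ z, ∑ x, j x y z * Real.log (b y z) := by
      rw [Finset.sum_comm]
      exact Finset.sum_congr rfl fun y _ => Finset.sum_comm
    rw [swap]
    refine Finset.sum_congr rfl fun y _ => Finset.sum_congr rfl fun z _ => ?_
    rw [← hjb y z, Finset.sum_mul]
  have E3 : ∑ z, c z * Real.log (c z)
      = ∑ x, ∑ y, ∑ z, j x y z * Real.log (c z) := by
    have s1 : (∑ x, ∑ y, ∑ z, j x y z * Real.log (c z))
        = ∑ x, ∑ z, ∑ y, j x y z * Real.log (c z) :=
      Finset.sum_congr rfl fun x _ => Finset.sum_comm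
    have s2 : (∑ x, ∑ z, ∑ y, j x y z * Real.log (c z))
        = ∑ z, ∑ x, ∑ y, j x y z * Real.log (c z) := Finset.sum_comm
    rw [s1, s2]
    refine Finset.sum_congr rfl fun z _ => ?_
    rw [← hac z, Finset.sum_mul]
    refine Finset.sum_congr rfl fun x _ => ?_
    rw [← hja x z, Finset.sum_mul]
  -- key termwise inequality
  have hterm : ∀ x y z, (if 0 < j x y z then j x y z - a x z * b y z / c z else 0)
      ≤ j x y z * Real.log (j x y z) + j x y z * Real.log (c z)
        - j x y z * Real.log (a x z) - j x y z * Real.log (b y z) := by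
    intro x y z
    by_cases hpos : 0 < j x y z
    · have ha' : 0 < a x z := lt_of_lt_of_le hpos (hjlea x y z)
      have hb' : 0 < b y z := lt_of_lt_of_le hpos (hjleb x y z)
      have hc' : 0 < c z := lt_of_lt_of_le ha' (halec x z)
      rw [if_pos hpos]
      have ht : 0 < a x z * b y z / (j x y z * c z) := by positivity
      have hlog := Real.log_le_sub_one_of_pos ht
      have hexp : Real.log (a x z * b y z / (j x y z * c z))
          = Real.log (a x z) + Real.log (b y z) - Real.log (j x y z) - Real.log (c z) := by
        rw [Real.log_div (by positivity) (by positivity),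
          Real.log_mul ha'.ne' hb'.ne', Real.log_mul hpos.ne' hc'.ne']
        ring
      rw [hexp] at hlog
      have hmul := mul_le_mul_of_nonneg_left hlog hpos.le
      have hdiv : j x y z * (a x z * b y z / (j x y z * c z) - 1)
          = a x z * b y z / c z - j x y z := by
        field_simp
      rw [hdiv, mul_sub, mul_sub, mul_add] at hmul
      linarith
    · have h0 : j x y z = 0 := le_antisymm (not_lt.1 hpos) (hj x y z)
      rw [if_neg hpos, h0]
      simp
  -- sum of key terms is nonnegative
  have hsum0 : 0 ≤ ∑ x, ∑ y, ∑ z, (if 0 < j x y z then j x y z - a x z * b y z / c z else 0) := by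
    have esplit : ∀ x y z, (if 0 < j x y z then j x y z - a x z * b y z / c z else 0)
        = (if 0 < j x y z then j x y z else 0) - (if 0 < j x y z then a x z * b y z / c z else 0) := by
      intro x y z; split <;> ring
    simp only [esplit, Finset.sum_sub_distrib]
    have eA : ∑ x, ∑ y, ∑ z, (if 0 < j x y z then j x y z else 0) = ∑ x, ∑ y, ∑ z, j x y z := by
      refine Finset.sum_congr rfl fun x _ => Finset.sum_congr rfl fun y _ =>
        Finset.sum_congr rfl fun z _ => ?_
      rcases lt_or_eq_of_le (hj x y z) with h | h
      · rw [if_pos h]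
      · rw [← h]; simp
    have eJ : ∑ x, ∑ y, ∑ z, j x y z = ∑ z, c z := by
      have h1 : ∀ x, ∑ y, ∑ z, j x y z = ∑ z, a x z := by
        intro x
        rw [Finset.sum_comm]
        exact Finset.sum_congr rfl fun z _ => hja x z
      rw [Finset.sum_congr rfl fun x _ => h1 x, Finset.sum_comm]
      exact Finset.sum_congr rfl fun z _ => hac z
    have eBle : ∑ x, ∑ y, ∑ z, (if 0 < j x y z then a x z * b y z / c z else 0)
        ≤ ∑ z, c z := by
      have step1 : ∑ x, ∑ y, ∑ z, (if 0 < j x y z then a x z * b y z / c z else 0)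
          ≤ ∑ x, ∑ y, ∑ z, (if 0 < c z then a x z * b y z / c z else 0) := by
        refine Finset.sum_le_sum fun x _ => Finset.sum_le_sum fun y _ =>
          Finset.sum_le_sum fun z _ => ?_
        by_cases hpos : 0 < j x y z
        · have hc' : 0 < c z :=
            lt_of_lt_of_le hpos ((hjlea x y z).trans (halec x z))
          rw [if_pos hpos, if_pos hc']
        · rw [if_neg hpos]
          split
          · exact div_nonneg (mul_nonneg (ha0 x z) (hb0 y z)) (hc0 z)
          · exact le_refl 0
      have step2 : ∑ x, ∑ y, ∑ z, (if 0 < c z then a x z * b y z / c z else 0) = ∑ z, c z := by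
        have s1 : (∑ x, ∑ y, ∑ z, (if 0 < c z then a x z * b y z / c z else 0))
            = ∑ x, ∑ z, ∑ y, (if 0 < c z then a x z * b y z / c z else 0) :=
          Finset.sum_congr rfl fun x _ => Finset.sum_comm
        have s2 : (∑ x, ∑ z, ∑ y, (if 0 < c z then a x z * b y z / c z else 0))
            = ∑ z, ∑ x, ∑ y, (if 0 < c z then a x z * b y z / c z else 0) := Finset.sum_comm
        rw [s1, s2]
        have inner : ∀ z, (∑ x, ∑ y, (if 0 < c z then a x z * b y z / c z else 0))
            = if 0 < c z then c z else 0 := by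
          intro z
          by_cases h : 0 < c z
          · simp only [if_pos h]
            have hx : ∀ x, ∑ y, a x z * b y z / c z = a x z := by
              intro x
              rw [← Finset.sum_div, ← Finset.mul_sum, hbc z]
              field_simp
            rw [Finset.sum_congr rfl fun x _ => hx x, hac z]
          · simp [h]
        rw [Finset.sum_congr rfl fun z _ => inner z]
        refine Finset.sum_congr rfl fun z _ => ?_
        rcases lt_or_eq_of_le (hc0 z) with h | h
        · rw [if_pos h]
        · rw [← h]; simp
      calc _ ≤ _ := step1
        _ = _ := step2
    linarith [eA, eJ, eBle]
  -- combine
  have hsum := Finset.sum_le_sum (fun x (_ : x ∈ Finset.univ) =>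
    Finset.sum_le_sum (fun y (_ : y ∈ Finset.univ) =>
      Finset.sum_le_sum (fun z (_ : z ∈ Finset.univ) => hterm x y z)))
  rw [E1, E2, E3]
  simp only [Finset.sum_sub_distrib, Finset.sum_add_distrib] at hsum
  linarith [hsum0.trans hsum]

lemma ent_eq_log [Fintype S] [DecidableEq S] (p : Ω → ℝ) (X : Ω → S) :
    ent p X = -(∑ x, pmass p X x * Real.log (pmass p X x)) / Real.log 2 := by
  unfold ent
  rw [neg_div, Finset.sum_div]
  congr 1
  refine Finset.sum_congr rfl fun x _ => ?_
  rw [Real.logb, ← mul_div_assoc]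


lemma ent_submod [Fintype S] [Fintype T] [Fintype U]
    [DecidableEq S] [DecidableEq T] [DecidableEq U]
    (p : Ω → ℝ) (hp : ∀ ω, 0 ≤ p ω) (X : Ω → S) (Y : Ω → T) (Z : Ω → U) :
    ent p (fun ω => (X ω, (Y ω, Z ω))) + ent p Z ≤
      ent p (fun ω => (X ω, Z ω)) + ent p (fun ω => (Y ω, Z ω)) := by
  set J := fun ω => (X ω, (Y ω, Z ω)) with hJ
  set Axz := fun ω => (X ω, Z ω) with hA
  set Byz := fun ω => (Y ω, Z ω) with hB
  have core := submod_core
    (fun x y z => pmass p J (x, (y, z)))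
    (fun x z => pmass p Axz (x, z))
    (fun y z => pmass p Byz (y, z))
    (fun z => pmass p Z z)
    (fun x y z => pmass_nonneg p hp J (x, (y, z)))
    (fun x z => pmass_mid p X Y Z x z)
    (fun y z => pmass_fst p X Byz (y, z))
    (fun z => pmass_fst p X Z z)
    (fun z => pmass_fst p Y Z z)
  have hlog2 : (0:ℝ) < Real.log 2 := Real.log_pos one_lt_two
  rw [ent_eq_log, ent_eq_log, ent_eq_log, ent_eq_log, ← add_div, ← add_div,
    div_le_div_iff_of_pos_right hlog2]
  have cJ : (∑ v : S × T × U, pmass p J v * Real.log (pmass p J v))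
      = ∑ x, ∑ y, ∑ z, pmass p J (x, (y, z)) * Real.log (pmass p J (x, (y, z))) := by
    rw [Fintype.sum_prod_type]
    exact Finset.sum_congr rfl fun x _ => Fintype.sum_prod_type _
  have cA : (∑ v : S × U, pmass p Axz v * Real.log (pmass p Axz v))
      = ∑ x, ∑ z, pmass p Axz (x, z) * Real.log (pmass p Axz (x, z)) :=
    Fintype.sum_prod_type _
  have cB : (∑ v : T × U, pmass p Byz v * Real.log (pmass p Byz v))
      = ∑ y, ∑ z, pmass p Byz (y, z) * Real.log (pmass p Byz (y, z)) :=
    Fintype.sum_prod_type _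
  rw [cJ, cA, cB]
  linarith [core]

lemma ent_indep [Fintype S] [Fintype T] [DecidableEq S] [DecidableEq T]
    (p : Ω → ℝ) (hps : ∑ ω, p ω = 1) (X : Ω → S) (Y : Ω → T)
    (h : ∀ x y, pmass p (fun ω => (X ω, Y ω)) (x, y) = pmass p X x * pmass p Y y) :
    ent p (fun ω => (X ω, Y ω)) = ent p X + ent p Y := by
  unfold ent
  rw [Fintype.sum_prod_type]
  have key : ∀ x y, pmass p (fun ω => (X ω, Y ω)) (x, y) *
      Real.logb 2 (pmass p (fun ω => (X ω, Y ω)) (x, y))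
      = pmass p Y y * (pmass p X x * Real.logb 2 (pmass p X x))
        + pmass p X x * (pmass p Y y * Real.logb 2 (pmass p Y y)) := by
    intro x y
    rw [h x y]
    rcases eq_or_ne (pmass p X x) 0 with h1 | h1
    · simp [h1]
    rcases eq_or_ne (pmass p Y y) 0 with h2 | h2
    · simp [h2]
    rw [Real.logb_mul h1 h2]
    ring
  have : ∀ x : S, ∑ y, pmass p (fun ω => (X ω, Y ω)) (x, y) *
      Real.logb 2 (pmass p (fun ω => (X ω, Y ω)) (x, y))
      = (pmass p X x * Real.logb 2 (pmass p X x))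
        + pmass p X x * ∑ y, (pmass p Y y * Real.logb 2 (pmass p Y y)) := by
    intro x
    rw [Finset.sum_congr rfl fun y _ => key x y, Finset.sum_add_distrib,
      ← Finset.sum_mul, sum_pmass, hps, ← Finset.mul_sum]
    ring
  rw [Finset.sum_congr rfl fun x _ => this x, Finset.sum_add_distrib,
    ← Finset.sum_mul, sum_pmass, hps]
  ring

end Aux

/-- Claim 1 (Section V-C): with `W₁ ⊥ W₂`, `X₁ᵢ` (hence `V₁ᵢ`) a deterministic function
of `(W₁, Ỹ₁^{i−1})`, `H(Y₁^N | W₁, Ỹ₁^N) = H(V₂^N | W₁, Ỹ₁^N)`, and `V₁^N` a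
deterministic function of `(W₁, Ỹ₁^{N−1})`, we have
`I(V₁^N;W₂) + H(V₂^N|W₁) − H(Y₁^N|W₁) − H(V₁^N|Y₁^N) ≤ H(Ỹ₁^N|W₁)`. -/
theorem stmt_12 {Ω A B SX SV1 SV2 SY SYt : Type*} [Fintype Ω]
    [Fintype A] [Fintype B] [Fintype SX] [Fintype SV1] [Fintype SV2]
    [Fintype SY] [Fintype SYt]
    [DecidableEq A] [DecidableEq B] [DecidableEq SX] [DecidableEq SV1]
    [DecidableEq SV2] [DecidableEq SY] [DecidableEq SYt]
    (p : Ω → ℝ) (hp : ∀ ω, 0 ≤ p ω) (hps : ∑ ω, p ω = 1)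
    (N : ℕ) (hN : 0 < N)
    (W1 : Ω → A) (W2 : Ω → B)
    (X1 : Ω → Fin N → SX) (V1 : Ω → Fin N → SV1) (V2 : Ω → Fin N → SV2)
    (Y1 : Ω → Fin N → SY) (Yt1 : Ω → Fin N → SYt)
    (hindep : IndepRV p W1 W2)
    (hX1 : ∀ i : Fin N, ∃ f : A × (Fin i.1 → SYt) → SX,
      ∀ ω, X1 ω i = f (W1 ω, fun j : Fin i.1 => Yt1 ω ⟨j.1, j.2.trans i.2⟩))
    (hV1i : ∀ i : Fin N, ∃ f : A × (Fin i.1 → SYt) → SV1,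
      ∀ ω, V1 ω i = f (W1 ω, fun j : Fin i.1 => Yt1 ω ⟨j.1, j.2.trans i.2⟩))
    (hHeq : condEnt p Y1 (fun ω => (W1 ω, Yt1 ω)) =
      condEnt p V2 (fun ω => (W1 ω, Yt1 ω)))
    (hV1 : ∃ f : A × (Fin (N - 1) → SYt) → (Fin N → SV1),
      ∀ ω, V1 ω = f (W1 ω, fun j : Fin (N - 1) => Yt1 ω ⟨j.1, by omega⟩)) :
    mutInfo p V1 W2 + condEnt p V2 W1 - condEnt p Y1 W1 - condEnt p V1 Y1 ≤
      condEnt p Yt1 W1 := by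
  obtain ⟨fd, hfd⟩ := hV1
  -- atoms
  -- F1 : independence
  have F1 : ent p (fun ω => (W1 ω, W2 ω)) = ent p W1 + ent p W2 :=
    ent_indep p hps W1 W2 hindep
  -- F2 : hHeq as an equality of joint entropies
  have F2 : ent p (fun ω => (Y1 ω, (W1 ω, Yt1 ω))) =
      ent p (fun ω => (V2 ω, (W1 ω, Yt1 ω))) := by
    unfold condEnt at hHeq
    linarith [hHeq]
  -- relabel : H[Y1,W1,Yt1] in the shape (Yt1,(Y1,W1))
  have F2' : ent p (fun ω => (Yt1 ω, (Y1 ω, W1 ω))) =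
      ent p (fun ω => (Y1 ω, (W1 ω, Yt1 ω))) := by
    refine ent_comp p _ _ (fun q => (q.2.2, (q.1, q.2.1))) ?_ (fun ω => rfl)
    rintro ⟨x1, x2, x3⟩ ⟨y1, y2, y3⟩ hxy
    simp only [Prod.mk.injEq] at hxy ⊢
    tauto
  -- F3 : H[V2,W1] ≤ H[V2,W1,Yt1]
  have F3 : ent p (fun ω => (V2 ω, W1 ω)) ≤
      ent p (fun ω => (V2 ω, (W1 ω, Yt1 ω))) := by
    have h1 := ent_le_ent_pair p hp Yt1 (fun ω => (V2 ω, W1 ω))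
    have h2 : ent p (fun ω => (Yt1 ω, (V2 ω, W1 ω))) =
        ent p (fun ω => (V2 ω, (W1 ω, Yt1 ω))) := by
      refine ent_comp p _ _ (fun q => (q.2.2, (q.1, q.2.1))) ?_ (fun ω => rfl)
      rintro ⟨x1, x2, x3⟩ ⟨y1, y2, y3⟩ hxy
      simp only [Prod.mk.injEq] at hxy ⊢
      tauto
    linarith [h1, h2]
  -- F4 : submodularity with Z = V1
  have F4 : ent p (fun ω => (W1 ω, (W2 ω, V1 ω))) + ent p V1 ≤
      ent p (fun ω => (V1 ω, W1 ω)) + ent p (fun ω => (V1 ω, W2 ω)) := by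
    have h1 := ent_submod p hp W1 W2 V1
    have h2 : ent p (fun ω => (W1 ω, V1 ω)) = ent p (fun ω => (V1 ω, W1 ω)) := by
      refine ent_comp p _ _ (fun q => (q.2, q.1)) ?_ (fun ω => rfl)
      rintro ⟨x1, x2⟩ ⟨y1, y2⟩ hxy
      simp only [Prod.mk.injEq] at hxy ⊢
      tauto
    have h3 : ent p (fun ω => (W2 ω, V1 ω)) = ent p (fun ω => (V1 ω, W2 ω)) := by
      refine ent_comp p _ _ (fun q => (q.2, q.1)) ?_ (fun ω => rfl)
      rintro ⟨x1, x2⟩ ⟨y1, y2⟩ hxy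
      simp only [Prod.mk.injEq] at hxy ⊢
      tauto
    linarith [h1, h2, h3]
  -- F5 : H[W1,W2] ≤ H[W1,W2,V1]
  have F5 : ent p (fun ω => (W1 ω, W2 ω)) ≤
      ent p (fun ω => (W1 ω, (W2 ω, V1 ω))) := by
    have h1 := ent_le_ent_pair p hp V1 (fun ω => (W1 ω, W2 ω))
    have h2 : ent p (fun ω => (V1 ω, (W1 ω, W2 ω))) =
        ent p (fun ω => (W1 ω, (W2 ω, V1 ω))) := by
      refine ent_comp p _ _ (fun q => (q.2.2, (q.1, q.2.1))) ?_ (fun ω => rfl)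
      rintro ⟨x1, x2, x3⟩ ⟨y1, y2, y3⟩ hxy
      simp only [Prod.mk.injEq] at hxy ⊢
      tauto
    linarith [h1, h2]
  -- F6 : submodularity with Z = Y1
  have F6 : ent p (fun ω => (V1 ω, (W1 ω, Y1 ω))) + ent p Y1 ≤
      ent p (fun ω => (V1 ω, Y1 ω)) + ent p (fun ω => (Y1 ω, W1 ω)) := by
    have h1 := ent_submod p hp V1 W1 Y1
    have h2 : ent p (fun ω => (W1 ω, Y1 ω)) = ent p (fun ω => (Y1 ω, W1 ω)) := by
      refine ent_comp p _ _ (fun q => (q.2, q.1)) ?_ (fun ω => rfl)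
      rintro ⟨x1, x2⟩ ⟨y1, y2⟩ hxy
      simp only [Prod.mk.injEq] at hxy ⊢
      tauto
    linarith [h1, h2]
  -- hV1-based determinism equalities
  have D1 : ent p (fun ω => (V1 ω, (Yt1 ω, W1 ω))) =
      ent p (fun ω => (Yt1 ω, W1 ω)) := by
    refine ent_pair_fun p (fun ω => (Yt1 ω, W1 ω)) V1
      (fun q => fd (q.2, fun j : Fin (N - 1) => q.1 ⟨j.1, by omega⟩)) ?_
    intro ω
    exact hfd ω
  have D2 : ent p (fun ω => (V1 ω, (Yt1 ω, (Y1 ω, W1 ω)))) =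
      ent p (fun ω => (Yt1 ω, (Y1 ω, W1 ω))) := by
    refine ent_pair_fun p (fun ω => (Yt1 ω, (Y1 ω, W1 ω))) V1
      (fun q => fd (q.2.2, fun j : Fin (N - 1) => q.1 ⟨j.1, by omega⟩)) ?_
    intro ω
    exact hfd ω
  -- F7 : submodularity with X = Yt1, Y = Y1, Z = (V1, W1)
  have F7 : ent p (fun ω => (Yt1 ω, (Y1 ω, W1 ω))) + ent p (fun ω => (V1 ω, W1 ω)) ≤
      ent p (fun ω => (Yt1 ω, W1 ω)) + ent p (fun ω => (V1 ω, (W1 ω, Y1 ω))) := by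
    have h1 := ent_submod p hp Yt1 Y1 (fun ω => (V1 ω, W1 ω))
    have h2 : ent p (fun ω => (Yt1 ω, (Y1 ω, (V1 ω, W1 ω)))) =
        ent p (fun ω => (V1 ω, (Yt1 ω, (Y1 ω, W1 ω)))) := by
      refine ent_comp p _ _ (fun q => (q.2.1, (q.2.2.1, (q.1, q.2.2.2)))) ?_ (fun ω => rfl)
      rintro ⟨x1, x2, x3, x4⟩ ⟨y1, y2, y3, y4⟩ hxy
      simp only [Prod.mk.injEq] at hxy ⊢
      tauto
    have h3 : ent p (fun ω => (Yt1 ω, (V1 ω, W1 ω))) =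
        ent p (fun ω => (V1 ω, (Yt1 ω, W1 ω))) := by
      refine ent_comp p _ _ (fun q => (q.2.1, (q.1, q.2.2))) ?_ (fun ω => rfl)
      rintro ⟨x1, x2, x3⟩ ⟨y1, y2, y3⟩ hxy
      simp only [Prod.mk.injEq] at hxy ⊢
      tauto
    have h4 : ent p (fun ω => (Y1 ω, (V1 ω, W1 ω))) =
        ent p (fun ω => (V1 ω, (W1 ω, Y1 ω))) := by
      refine ent_comp p _ _ (fun q => (q.2.2, (q.1, q.2.1))) ?_ (fun ω => rfl)
      rintro ⟨x1, x2, x3⟩ ⟨y1, y2, y3⟩ hxy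
      simp only [Prod.mk.injEq] at hxy ⊢
      tauto
    linarith [h1, h2, h3, h4, D1, D2]
  unfold mutInfo condEnt
  linarith [F1, F2, F2', F3, F4, F5, F6, F7]
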